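/- For every odd positive integer f, every natural number n, and every real number x, the Euler polynomials satisfy the distribution relation E_n(x) = f^n · Σ_{a=0}^{f-1} (-1)^a · E_n((x+a)/f). -/

import Mathlib

/-- The Euler numbers `E₀ = 1`, `∑_{k=0}^{n} C(n,k) Eₖ + Eₙ = 0` for `n ≥ 1`. -/
noncomputable def eulerNumber : ℕ → ℚ
  | 0 => 1
  | n + 1 => (-1/2) * ∑ k ∈ (Finset.range (n+1)).attach,
      ((n+1).choose k.1 : ℚ) * eulerNumber k.1
  decreasing_by exact Finset.mem_range.mp k.2

/-- The Euler polynomials `Eₙ(x) = ∑_{k=0}^n C(n,k) Eₖ x^{n-k}`. -/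
noncomputable def eulerPoly (n : ℕ) (x : ℝ) : ℝ :=
  ∑ k ∈ Finset.range (n+1), (n.choose k : ℝ) * (eulerNumber k : ℝ) * x ^ (n - k)

lemma sumE (m : ℕ) (hm : 1 ≤ m) :
    ∑ k ∈ Finset.range (m+1), (m.choose k : ℚ) * eulerNumber k = - eulerNumber m := by
  obtain ⟨m, rfl⟩ : ∃ m', m = m' + 1 := ⟨m - 1, by omega⟩
  have hdef : eulerNumber (m+1) = (-1/2) * ∑ k ∈ (Finset.range (m+1)).attach,
      ((m+1).choose k.1 : ℚ) * eulerNumber k.1 := by rw [eulerNumber]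
  rw [Finset.sum_attach (Finset.range (m+1)) (fun k => ((m+1).choose k : ℚ) * eulerNumber k)] at hdef
  rw [Finset.sum_range_succ, Nat.choose_self]
  push_cast
  linarith

lemma hE0 : eulerNumber 0 = 1 := by rw [eulerNumber]

lemma choose_swap (n k j : ℕ) : n.choose k * (n-k).choose j = n.choose j * (n-j).choose k := by
  by_cases h : k + j ≤ n
  · have h1 := Nat.choose_mul (n := n) (Nat.le_add_right k j)
    have h2 := Nat.choose_mul (n := n) (Nat.le_add_right j k)
    have e1 : k + j - k = j := by omega
    have e2 : j + k - j = k := by omega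
    rw [e1] at h1; rw [e2] at h2
    rw [Nat.add_comm j k] at h2
    rw [← h1, ← h2, Nat.choose_symm_add]
  · have hh : ∀ a b : ℕ, a + b > n → n.choose a * (n-a).choose b = 0 := by
      intro a b hab
      rcases le_or_gt a n with ha | ha
      · have : n - a < b := by omega
        rw [Nat.choose_eq_zero_of_lt this, Nat.mul_zero]
      · rw [Nat.choose_eq_zero_of_lt ha, Nat.zero_mul]
    rw [hh k j (by omega), hh j k (by omega)]

lemma keyE (n : ℕ) (x : ℝ) : eulerPoly n (x+1) + eulerPoly n x = 2 * x ^ n := by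
  have hz : ∀ (m : ℕ) (g : ℕ → ℝ), ∀ j ∈ Finset.range (n+1), j ∉ Finset.range (m+1) →
      (m.choose j : ℝ) * g j = 0 := by
    intro m g j _ hj2
    simp only [Finset.mem_range, not_lt] at hj2
    rw [Nat.choose_eq_zero_of_lt (by omega)]
    simp
  unfold eulerPoly
  have e1 : ∀ k ∈ Finset.range (n+1), ((x+1):ℝ)^(n-k)
      = ∑ j ∈ Finset.range (n+1), ((n-k).choose j : ℝ) * x^j := by
    intro k hk
    simp only [Finset.mem_range] at hk
    rw [add_pow]
    refine (Finset.sum_congr rfl fun i _ => by ring).trans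
      (Finset.sum_subset (Finset.range_subset_range.mpr (by omega)) (hz _ (fun j => x^j)))
  calc
    (∑ k ∈ Finset.range (n+1), (n.choose k : ℝ) * (eulerNumber k : ℝ) * (x+1)^(n-k))
        + ∑ k ∈ Finset.range (n+1), (n.choose k : ℝ) * (eulerNumber k : ℝ) * x^(n-k)
      = (∑ j ∈ Finset.range (n+1), ∑ k ∈ Finset.range (n+1),
          (n.choose k : ℝ) * (eulerNumber k : ℝ) * (((n-k).choose j : ℝ) * x^j))
        + ∑ j ∈ Finset.range (n+1), (n.choose j : ℝ) * (eulerNumber (n-j) : ℝ) * x^j := by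
        congr 1
        · rw [Finset.sum_comm]
          exact Finset.sum_congr rfl fun k hk => by rw [e1 k hk, Finset.mul_sum]
        · rw [← Finset.sum_range_reflect
            (fun k => (n.choose k : ℝ) * (eulerNumber k : ℝ) * x^(n-k)) (n+1)]
          refine Finset.sum_congr rfl fun j hj => ?_
          simp only [Finset.mem_range] at hj
          have h1 : n + 1 - 1 - j = n - j := by omega
          have h2 : n - (n - j) = j := by omega
          rw [h1, h2, Nat.choose_symm (by omega)]
    _ = ∑ j ∈ Finset.range (n+1), (n.choose j : ℝ) *
          (((∑ k ∈ Finset.range (n-j+1), ((n-j).choose k : ℚ) * eulerNumber k : ℚ) : ℝ)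
            + (eulerNumber (n-j) : ℝ)) * x^j := by
        rw [← Finset.sum_add_distrib]
        refine Finset.sum_congr rfl fun j hj => ?_
        simp only [Finset.mem_range] at hj
        have hterm : ∀ k ∈ Finset.range (n+1),
            (n.choose k : ℝ) * (eulerNumber k : ℝ) * (((n-k).choose j : ℝ) * x^j)
            = (n.choose j : ℝ) * (((n-j).choose k : ℝ) * (eulerNumber k : ℝ)) * x^j := by
          intro k _
          have hc : (n.choose k : ℝ) * ((n-k).choose j : ℝ)
              = (n.choose j : ℝ) * ((n-j).choose k : ℝ) := by
            exact_mod_cast congrArg (Nat.cast : ℕ → ℝ) (choose_swap n k j)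
          linear_combination ((eulerNumber k : ℝ) * x^j) * hc
        rw [Finset.sum_congr rfl hterm]
        have htrunc : ∑ k ∈ Finset.range (n+1),
            (n.choose j : ℝ) * (((n-j).choose k : ℝ) * (eulerNumber k : ℝ)) * x^j
            = (n.choose j : ℝ) *
              ((∑ k ∈ Finset.range (n-j+1), ((n-j).choose k : ℚ) * eulerNumber k : ℚ) : ℝ) * x^j := by
          have : ∑ k ∈ Finset.range (n-j+1), ((n-j).choose k : ℝ) * (eulerNumber k : ℝ)
              = ∑ k ∈ Finset.range (n+1), ((n-j).choose k : ℝ) * (eulerNumber k : ℝ) :=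
            Finset.sum_subset (Finset.range_subset_range.mpr (by omega))
              (hz _ (fun k => (eulerNumber k : ℝ)))
          rw [← Finset.sum_mul, ← Finset.mul_sum, ← this]
          push_cast
          ring
        rw [htrunc]
        ring
    _ = 2 * x^n := by
        rw [Finset.sum_range_succ]
        have h0 : ∀ j ∈ Finset.range n, (n.choose j : ℝ) *
            (((∑ k ∈ Finset.range (n-j+1), ((n-j).choose k : ℚ) * eulerNumber k : ℚ) : ℝ)
              + (eulerNumber (n-j) : ℝ)) * x^j = 0 := by
          intro j hj
          simp only [Finset.mem_range] at hj
          rw [sumE (n-j) (by omega)]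
          push_cast
          ring
        rw [Finset.sum_eq_zero h0]
        simp only [Nat.sub_self, Nat.choose_self]
        rw [Finset.sum_range_one]
        norm_num [hE0]

lemma keyQ (f : ℕ) (hf : 0 < f) (hodd : Odd f) (n : ℕ) (x : ℝ) :
    (f:ℝ)^n * (∑ a ∈ Finset.range f, (-1:ℝ)^a * eulerPoly n ((x+1+a)/f))
      + (f:ℝ)^n * (∑ a ∈ Finset.range f, (-1:ℝ)^a * eulerPoly n ((x+a)/f)) = 2 * x^n := by
  have hfne : (f:ℝ) ≠ 0 := Nat.cast_ne_zero.mpr hf.ne'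
  set t : ℕ → ℝ := fun b => (-1:ℝ)^b * eulerPoly n ((x+b)/f) with ht
  have hS1 : (∑ a ∈ Finset.range f, (-1:ℝ)^a * eulerPoly n ((x+1+a)/f))
      = - ∑ a ∈ Finset.range f, t (a+1) := by
    rw [← Finset.sum_neg_distrib]
    refine Finset.sum_congr rfl fun a _ => ?_
    have : x + 1 + (a:ℝ) = x + ((a:ℕ)+1 : ℕ) := by push_cast; ring
    rw [this, ht]
    simp only [pow_succ]
    ring
  have hshift : ∑ a ∈ Finset.range f, t (a+1) = (∑ b ∈ Finset.range f, t b) + t f - t 0 := by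
    have h1 := Finset.sum_range_succ' t f
    have h2 := Finset.sum_range_succ t f
    rw [h2] at h1
    linarith
  have htf : t f = - eulerPoly n (x/f + 1) := by
    rw [ht]
    simp only
    rw [hodd.neg_one_pow]
    have : (x + (f:ℝ))/f = x/f + 1 := by field_simp
    rw [this]
    ring
  have ht0 : t 0 = eulerPoly n (x/f) := by
    rw [ht]; norm_num
  rw [hS1, hshift, htf, ht0]
  have hkey := keyE n (x/f)
  have : (∑ a ∈ Finset.range f, (-1:ℝ)^a * eulerPoly n ((x+a)/f)) = ∑ b ∈ Finset.range f, t b := rfl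
  rw [this]
  rw [← mul_add]
  have hcollapse : -((∑ b ∈ Finset.range f, t b) + -eulerPoly n (x/f+1) - eulerPoly n (x/f))
      + (∑ b ∈ Finset.range f, t b) = 2 * (x/f)^n := by
    rw [← hkey]; ring
  rw [hcollapse, div_pow]
  field_simp

lemma poly_unique (p q : Polynomial ℝ)
    (h : ∀ x : ℝ, p.eval (x+1) + p.eval x = q.eval (x+1) + q.eval x) : p = q := by
  set d := p - q with hd
  have hdval : ∀ x : ℝ, d.eval (x+1) = - d.eval x := by
    intro x
    have := h x
    simp only [hd, Polynomial.eval_sub]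
    linarith
  have h2 : ∀ x : ℝ, d.eval (x+2) = d.eval x := by
    intro x
    have ha := hdval (x+1)
    rw [show x+1+1 = x+2 by ring] at ha
    rw [ha, hdval x, neg_neg]
  have hroots : ∀ k : ℕ, d.eval (2*(k:ℝ)) = d.eval 0 := by
    intro k
    induction k with
    | zero => norm_num
    | succ k ih =>
      have hb := h2 (2*(k:ℝ))
      push_cast
      rw [show (2:ℝ)*((k:ℝ)+1) = 2*(k:ℝ)+2 by ring, hb, ih]
  have hconst : d - Polynomial.C (d.eval 0) = 0 := by
    apply Polynomial.eq_zero_of_infinite_isRoot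
    have hinj : Function.Injective (fun k : ℕ => (2*(k:ℝ))) := by
      intro a b hab
      simp only at hab
      have := mul_left_cancel₀ (two_ne_zero (α := ℝ)) hab
      exact_mod_cast this
    refine (Set.infinite_range_of_injective hinj).mono ?_
    rintro y ⟨k, rfl⟩
    simp [Polynomial.IsRoot, hroots k]
  have hdc : d = Polynomial.C (d.eval 0) := by
    have := sub_eq_zero.mp hconst
    exact this
  have h1 : d.eval 1 = d.eval 0 := by rw [hdc]; simp
  have h1' : d.eval (0+1) = - d.eval 0 := hdval 0
  rw [show (0:ℝ)+1 = 1 by ring] at h1'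
  have h0 : d.eval 0 = 0 := by linarith
  have : d = 0 := by rw [hdc, h0]; simp
  have := sub_eq_zero.mp this
  exact this

noncomputable def eulerP (n : ℕ) : Polynomial ℝ :=
  ∑ k ∈ Finset.range (n+1),
    Polynomial.C ((n.choose k : ℝ) * (eulerNumber k : ℝ)) * Polynomial.X ^ (n-k)

lemma evalP (n : ℕ) (x : ℝ) : (eulerP n).eval x = eulerPoly n x := by
  simp [eulerP, eulerPoly, Polynomial.eval_finset_sum]

noncomputable def eulerQ (n f : ℕ) : Polynomial ℝ :=
  Polynomial.C ((f:ℝ)^n) * ∑ a ∈ Finset.range f,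
    Polynomial.C ((-1:ℝ)^a) *
      (eulerP n).comp ((Polynomial.X + Polynomial.C (a:ℝ)) * Polynomial.C ((f:ℝ))⁻¹)

lemma evalQ (n f : ℕ) (x : ℝ) :
    (eulerQ n f).eval x
      = (f:ℝ)^n * ∑ a ∈ Finset.range f, (-1:ℝ)^a * eulerPoly n ((x + a) / f) := by
  simp [eulerQ, Polynomial.eval_finset_sum, Polynomial.eval_comp, evalP, div_eq_mul_inv]


/-- Distribution relation for Euler polynomials:
for odd positive `f`, `Eₙ(x) = fⁿ ∑_{a=0}^{f-1} (-1)^a Eₙ((x+a)/f)`. -/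
theorem eulerPoly_distribution (f : ℕ) (hf : 0 < f) (hodd : Odd f) (n : ℕ) (x : ℝ) :
    eulerPoly n x =
      (f : ℝ) ^ n * ∑ a ∈ Finset.range f, (-1 : ℝ) ^ a * eulerPoly n ((x + a) / f) := by
  have hPQ : eulerP n = eulerQ n f := by
    apply poly_unique
    intro y
    rw [evalP, evalP, evalQ, evalQ, keyE n y]
    exact (keyQ f hf hodd n y).symm
  rw [← evalP, hPQ, evalQ]
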